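/- Let k and l be nonnegative integers and let f : ℝ → ℝ be k times continuously differentiable. Then for every s ∈ ℝ, s^l · f^{(k)}(s) = Σ_{m=0}^{min(l,k)} ((−1)^m (l−m+1)_m (k−m+1)_m / m!) · d^{k−m}/ds^{k−m} [ s^{l−m} f(s) ], where d^{j}/ds^{j}[s^{i} f(s)] denotes the j-th derivative of the function s ↦ s^{i} f(s). -/

import Mathlib

noncomputable def poch (x : ℝ) (n : ℕ) : ℝ := ∏ i ∈ Finset.range n, (x + i)

private lemma itd_add {n : ℕ} {f g : ℝ → ℝ} (hf : ContDiff ℝ n f) (hg : ContDiff ℝ n g)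
    (x : ℝ) :
    iteratedDeriv n (fun y => f y + g y) x = iteratedDeriv n f x + iteratedDeriv n g x := by
  simp only [iteratedDeriv_eq_iteratedFDeriv]
  rw [iteratedFDeriv_add_apply' hf.contDiffAt hg.contDiffAt]
  rfl

private lemma itd_mul_x : ∀ (j : ℕ) (g : ℝ → ℝ), ContDiff ℝ j g → ∀ s : ℝ,
    iteratedDeriv j (fun x => x * g x) s
      = s * iteratedDeriv j g s + (j : ℝ) * iteratedDeriv (j - 1) g s := by
  intro j
  induction j with
  | zero => intro g hg s; simp
  | succ j ih =>
    intro g hg s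
    have hg1 : ContDiff ℝ ((j : WithTop ℕ∞) + 1) g := by exact_mod_cast hg
    have hg' : Differentiable ℝ g := hg.differentiable (by simp)
    have hgd : ContDiff ℝ j (deriv g) := (contDiff_succ_iff_deriv.mp hg1).2.2
    have hgj : ContDiff ℝ j g := hg.of_le (by exact_mod_cast Nat.le_succ j)
    have hderiv : deriv (fun x => x * g x) = fun x => g x + x * deriv g x := by
      funext x
      rw [deriv_fun_mul differentiableAt_fun_id (hg'.differentiableAt)]
      simp
    rw [iteratedDeriv_succ', hderiv,
      itd_add hgj (show ContDiff ℝ (j : ℕ) (fun x : ℝ => x * deriv g x) from contDiff_id.mul hgd) s,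
      ih (deriv g) hgd s]
    rcases j with _ | i
    · simp [← iteratedDeriv_succ']
      ring
    · rw [show (i + 1 : ℕ) - 1 = i from rfl,
        show iteratedDeriv (i + 1) (deriv g) = iteratedDeriv (i + 2) g from
          (iteratedDeriv_succ' ..).symm,
        show iteratedDeriv i (deriv g) = iteratedDeriv (i + 1) g from (iteratedDeriv_succ' ..).symm]
      push_cast
      ring

private lemma aux (k : ℕ) (f : ℝ → ℝ) (hf : ContDiff ℝ k f) : ∀ (l : ℕ) (s : ℝ),
    s ^ l * iteratedDeriv k f s =
      ∑ m ∈ Finset.range (l + 1),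
        ((-1 : ℝ) ^ m * (l.choose m : ℝ) * (k.choose m : ℝ) * (m.factorial : ℝ)) *
          iteratedDeriv (k - m) (fun x => x ^ (l - m) * f x) s := by
  intro l
  induction l with
  | zero =>
    intro s
    simp [Finset.sum_range_one]
  | succ l ih =>
    intro s
    set G : ℕ → ℝ := fun m => iteratedDeriv (k - m) (fun x => x ^ (l + 1 - m) * f x) s with hG
    set c : ℕ → ℝ := fun m =>
      (-1 : ℝ) ^ m * (l.choose m : ℝ) * (k.choose m : ℝ) * (m.factorial : ℝ) with hc
    set E : ℕ → ℝ := fun m =>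
      (if m = 0 then 0 else ((k - (m - 1) : ℕ) : ℝ) * c (m - 1)) * G m with hE
    have key : ∀ m ∈ Finset.range (l + 1),
        c m * (s * iteratedDeriv (k - m) (fun x => x ^ (l - m) * f x) s)
          = c m * G m - E (m + 1) := by
      intro m hm
      have hm' : m ≤ l := Nat.lt_succ_iff.mp (Finset.mem_range.mp hm)
      have hsm : ContDiff ℝ ((k - m : ℕ)) (fun x : ℝ => x ^ (l - m) * f x) :=
        (contDiff_id.pow _).mul (hf.of_le (by exact_mod_cast Nat.sub_le k m))
      have hmul := itd_mul_x (k - m) _ hsm s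
      have hfun : (fun x : ℝ => x * (x ^ (l - m) * f x)) = fun x => x ^ (l + 1 - m) * f x := by
        funext x
        rw [show l + 1 - m = (l - m) + 1 by omega]
        ring
      rw [hfun] at hmul
      have h1 : k - m - 1 = k - (m + 1) := by omega
      have h2 : l - m = l + 1 - (m + 1) := by omega
      have hEe : E (m + 1) = ((k - m : ℕ) : ℝ) * c m * G (m + 1) := by
        simp only [hE, Nat.add_sub_cancel, if_neg (Nat.succ_ne_zero m)]
      rw [hEe]
      simp only [hG]
      rw [← h1, ← h2]
      linear_combination (-c m) * hmul
    calc s ^ (l + 1) * iteratedDeriv k f s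
        = s * (s ^ l * iteratedDeriv k f s) := by ring
      _ = ∑ m ∈ Finset.range (l + 1),
            c m * (s * iteratedDeriv (k - m) (fun x => x ^ (l - m) * f x) s) := by
          rw [ih s, Finset.mul_sum]
          exact Finset.sum_congr rfl fun m _ => by simp only [hc]; ring
      _ = ∑ m ∈ Finset.range (l + 1), (c m * G m - E (m + 1)) := Finset.sum_congr rfl key
      _ = (∑ m ∈ Finset.range (l + 1), c m * G m)
            - ∑ m ∈ Finset.range (l + 1), E (m + 1) := Finset.sum_sub_distrib _ _
      _ = (∑ m ∈ Finset.range (l + 2), c m * G m)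
            - ∑ m ∈ Finset.range (l + 2), E m := by
          rw [Finset.sum_range_succ (fun m => c m * G m) (l + 1),
            Finset.sum_range_succ' E (l + 1)]
          have hc0 : c (l + 1) = 0 := by
            simp [hc, Nat.choose_eq_zero_of_lt (Nat.lt_succ_self l)]
          have hE0 : E 0 = 0 := by simp [hE]
          rw [hc0, hE0]
          ring
      _ = ∑ m ∈ Finset.range (l + 2), (c m * G m - E m) := (Finset.sum_sub_distrib _ _).symm
      _ = ∑ m ∈ Finset.range (l + 1 + 1),
            ((-1 : ℝ) ^ m * ((l + 1).choose m : ℝ) * (k.choose m : ℝ) * (m.factorial : ℝ)) *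
              iteratedDeriv (k - m) (fun x => x ^ (l + 1 - m) * f x) s := by
          refine Finset.sum_congr rfl fun m _ => ?_
          rw [show iteratedDeriv (k - m) (fun x => x ^ (l + 1 - m) * f x) s = G m from rfl]
          cases m with
          | zero => simp [hE, hc]
          | succ j =>
            have hEj : E (j + 1) = ((k - j : ℕ) : ℝ) * c j * G (j + 1) := by
              simp only [hE, Nat.add_sub_cancel, if_neg (Nat.succ_ne_zero j)]
            rw [hEj]
            simp only [hc]
            rw [Nat.choose_succ_succ l j]
            have hr : ((k.choose (j + 1)) : ℝ) * ((j : ℝ) + 1)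
                = (k.choose j : ℝ) * ((k - j : ℕ) : ℝ) := by
              exact_mod_cast Nat.choose_succ_right_eq k j
            push_cast [Nat.factorial_succ]
            linear_combination ((-1 : ℝ) ^ j * (l.choose j : ℝ) * (j.factorial : ℝ) * G (j + 1)) * hr

private lemma prod_range_add (a m : ℕ) : (∏ i ∈ Finset.range m, (a + i)) = a.ascFactorial m := by
  induction m with
  | zero => simp
  | succ m ih => rw [Finset.prod_range_succ, ih, Nat.ascFactorial_succ, mul_comm]

private lemma poch_nat (a m : ℕ) : poch (a : ℝ) m = ((a.ascFactorial m : ℕ) : ℝ) := by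
  unfold poch
  rw [← prod_range_add]
  push_cast
  rfl

private lemma poch_choose {n m : ℕ} (h : m ≤ n) :
    poch (((n - m + 1 : ℕ)) : ℝ) m = ((m.factorial * n.choose m : ℕ) : ℝ) := by
  rw [poch_nat]
  congr 1
  rw [Nat.ascFactorial_eq_factorial_mul_choose (n - m) m, Nat.sub_add_cancel h]

/-- Order-changing rule: for `f` k-times continuously differentiable,
`s^l f^(k)(s) = Σ_{m=0}^{min(l,k)} ((−1)^m (l−m+1)_m (k−m+1)_m / m!) (d/ds)^{k−m} [s^{l−m} f(s)]`. -/
theorem stmt2 (k l : ℕ) (f : ℝ → ℝ) (hf : ContDiff ℝ k f) (s : ℝ) :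
    s ^ l * iteratedDeriv k f s =
      ∑ m ∈ Finset.range (min l k + 1),
        ((-1 : ℝ) ^ m * poch ((l - m + 1 : ℕ) : ℝ) m * poch ((k - m + 1 : ℕ) : ℝ) m
            / (m.factorial : ℝ)) *
          iteratedDeriv (k - m) (fun x => x ^ (l - m) * f x) s := by
  rw [aux k f hf l s]
  have hmin : Finset.range (min l k + 1) ⊆ Finset.range (l + 1) :=
    Finset.range_subset_range.mpr (by omega)
  have hz : ∀ m ∈ Finset.range (l + 1), m ∉ Finset.range (min l k + 1) →
      ((-1 : ℝ) ^ m * (l.choose m : ℝ) * (k.choose m : ℝ) * (m.factorial : ℝ)) *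
        iteratedDeriv (k - m) (fun x => x ^ (l - m) * f x) s = 0 := by
    intro m hm hm'
    simp only [Finset.mem_range] at hm hm'
    have hk : k < m := by omega
    rw [Nat.choose_eq_zero_of_lt hk]
    simp
  calc ∑ m ∈ Finset.range (l + 1),
        ((-1 : ℝ) ^ m * (l.choose m : ℝ) * (k.choose m : ℝ) * (m.factorial : ℝ)) *
          iteratedDeriv (k - m) (fun x => x ^ (l - m) * f x) s
      = ∑ m ∈ Finset.range (min l k + 1),
        ((-1 : ℝ) ^ m * (l.choose m : ℝ) * (k.choose m : ℝ) * (m.factorial : ℝ)) *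
          iteratedDeriv (k - m) (fun x => x ^ (l - m) * f x) s :=
        (Finset.sum_subset hmin hz).symm
    _ = _ := by
        refine Finset.sum_congr rfl fun m hm => ?_
        simp only [Finset.mem_range] at hm
        have hml : m ≤ l := by omega
        have hmk : m ≤ k := by omega
        rw [poch_choose hml, poch_choose hmk]
        have hfac : (m.factorial : ℝ) ≠ 0 := Nat.cast_ne_zero.mpr m.factorial_ne_zero
        push_cast
        field_simp
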